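/- Suppose c_1 > 0, |c_2 + c_1^2 a_2| ≤ R/2, |c_2| ≤ 2c_1(1 − c_1), c_1 ≤ 1, and c_1 ≥ (3√3/(2π))·R =: 1/d for some R ∈ (0,1). Then |a_2| ≤ d(dR/2 + 2) − 2. -/

import Mathlib

theorem stmt_14 (c1 R : ℝ) (c2 a2 : ℂ) (hR0 : 0 < R) (hR1 : R < 1)
    (hc1 : 0 < c1) (hc1' : c1 ≤ 1)
    (h1 : ‖c2 + (c1 : ℂ) ^ 2 * a2‖ ≤ R / 2)
    (h2 : ‖c2‖ ≤ 2 * c1 * (1 - c1))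
    (h3 : c1 ≥ (3 * Real.sqrt 3 / (2 * Real.pi)) * R) :
    ‖a2‖ ≤ (2 * Real.pi / (3 * Real.sqrt 3 * R)) *
      ((2 * Real.pi / (3 * Real.sqrt 3 * R)) * R / 2 + 2) - 2 := by
  have hpi := Real.pi_pos
  have hs3 : (0:ℝ) < Real.sqrt 3 := Real.sqrt_pos.mpr (by norm_num)
  set d := 2 * Real.pi / (3 * Real.sqrt 3 * R) with hd_def
  have hd : 0 < d := by positivity
  have hcd : 1 ≤ c1 * d := by
    rw [hd_def, mul_div_assoc', le_div_iff₀ (by positivity)]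
    have h3' := mul_le_mul_of_nonneg_right h3 (le_of_lt (mul_pos two_pos hpi))
    have : 3 * Real.sqrt 3 / (2 * Real.pi) * R * (2 * Real.pi) = 3 * Real.sqrt 3 * R := by
      field_simp
    nlinarith [this]
  have key : ‖a2‖ * c1 ^ 2 ≤ R / 2 + 2 * c1 * (1 - c1) := by
    have habs : ‖(c1:ℂ) ^ 2 * a2‖ = c1 ^ 2 * ‖a2‖ := by
      rw [norm_mul, norm_pow, Complex.norm_real, Real.norm_eq_abs, abs_of_pos hc1]
    have : ‖(c1:ℂ) ^ 2 * a2‖ ≤ R / 2 + ‖c2‖ := by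
      calc ‖(c1:ℂ) ^ 2 * a2‖
          = ‖(c2 + (c1:ℂ) ^ 2 * a2) - c2‖ := by ring_nf
        _ ≤ ‖c2 + (c1:ℂ) ^ 2 * a2‖ + ‖c2‖ := by
            exact (norm_sub_le _ _)
        _ ≤ R / 2 + ‖c2‖ := by linarith
    rw [habs] at this
    nlinarith [this]
  have hA := norm_nonneg a2
  rw [ge_iff_le] at h3
  nlinarith [key, mul_pos hc1 hc1, mul_nonneg (mul_nonneg hA hc1.le) (sub_nonneg.2 hcd),
    mul_nonneg (mul_nonneg hR0.le (sub_nonneg.2 hcd)) (by nlinarith : (0:ℝ) ≤ c1 * d + 1),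
    mul_nonneg (mul_nonneg hc1.le hd.le) (sub_nonneg.2 hcd)]
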